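/- Assume hypotheses (Q1)–(Q5) and write F = {t_1, ..., t_M} with M ≥ 2. Let a, a' ∈ Γ with a ≠ a'. Suppose f ∈ W \ {0} satisfies V_{t_j}(f) = a for j = 1, ..., M−1 and V_{t_M}(f) = a', and suppose g ∈ W \ {0} satisfies V_{t_j}(g) = a' for every j = 1, ..., M. Then there exists a nonzero c ∈ K such that the element f̃ := f − c·g is nonzero and satisfies: V_{t_j}(f̃) = a for j = 1, ..., M−1, and a' <_{t_M} V_{t_M}(f̃) ≤_{t_M} a. (This is the correction step in the inductive construction of a common representative for a leaf of the quasi-valuations of a balanced Seshadri stratification.) -/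
import Mathlib


/-- The lexicographic order on `ℚ^A` determined by a linear order `t` on `A`:
`u ≤_t v` iff `u = v`, or `u p < v p` where `p` is the `t`-largest element at which
`u` and `v` differ (equivalently, `u p < v p` and `u`, `v` agree at all `t`-larger elements). -/
def lexLe {A : Type*} (t : LinearOrder A) (u v : A → ℚ) : Prop :=
  u = v ∨ ∃ p, u p < v p ∧ ∀ q, t.lt p q → u q = v q

/-- The strict lexicographic order determined by `t`. -/
def lexLt {A : Type*} (t : LinearOrder A) (u v : A → ℚ) : Prop :=
  lexLe t u v ∧ u ≠ v


lemma lexLe_trans' {A : Type*} (t : LinearOrder A) {u v w : A → ℚ}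
    (h1 : lexLe t u v) (h2 : lexLe t v w) : lexLe t u w := by
  letI := t
  rcases h1 with rfl | ⟨p, hp, hq⟩
  · exact h2
  rcases h2 with rfl | ⟨p', hp', hq'⟩
  · exact Or.inr ⟨p, hp, hq⟩
  rcases lt_trichotomy p p' with h | rfl | h
  · refine Or.inr ⟨p', ?_, ?_⟩
    · rw [hq p' h]; exact hp'
    · intro q hqq; rw [hq q (h.trans hqq), hq' q hqq]
  · exact Or.inr ⟨p, hp.trans hp', fun q hqq => (hq q hqq).trans (hq' q hqq)⟩
  · refine Or.inr ⟨p, ?_, ?_⟩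
    · rw [← hq' p h]; exact hp
    · intro q hqq; rw [hq q hqq, hq' q (h.trans hqq)]

lemma lexLe_antisymm' {A : Type*} (t : LinearOrder A) {u v : A → ℚ}
    (h1 : lexLe t u v) (h2 : lexLe t v u) : u = v := by
  letI := t
  rcases h1 with rfl | ⟨p, hp, hq⟩
  · rfl
  rcases h2 with rfl | ⟨p', hp', hq'⟩
  · rfl
  exfalso
  rcases lt_trichotomy p p' with h | rfl | h
  · exact absurd (hq p' h) (ne_of_gt hp')
  · exact absurd (hp.trans hp') (lt_irrefl _)
  · exact absurd (hq' p h) (ne_of_gt hp)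

/-- The correction step in the construction of a common leaf representative.
The family of linear orders is `t 0, …, t (Fin.last M)` with `M ≥ 1`, so it has
`M + 1 ≥ 2` members (`t (Fin.last M)` playing the role of `t_M` and the others of
`t_1, …, t_{M-1}` in the paper). Under (Q1)–(Q5), if `a ≠ a'` in `Γ`, `f ≠ 0` has
`V j f = a` for all `j ≠ Fin.last M` and `V (Fin.last M) f = a'`, and `g ≠ 0` has
`V j g = a'` for all `j`, then there is `c ≠ 0` such that `f - c • g` is nonzero,
`V j (f - c • g) = a` for all `j ≠ Fin.last M`, and
`a' <_{t (Fin.last M)} V (Fin.last M) (f - c • g) ≤_{t (Fin.last M)} a`. -/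
theorem correction_step {K W A : Type*} [Field K] [AddCommGroup W] [Module K W] [Fintype A]
    (M : ℕ) (hM : 1 ≤ M)
    (t : Fin (M + 1) → LinearOrder A) (V : Fin (M + 1) → W → (A → ℚ)) (Γ : Set (A → ℚ))
    (Q1 : ∀ (i : Fin (M + 1)) (c : K) (f : W), c ≠ 0 → f ≠ 0 → V i (c • f) = V i f)
    (Q2 : ∀ (i : Fin (M + 1)) (f g : W), f ≠ 0 → g ≠ 0 → f + g ≠ 0 →
      lexLe (t i) (V i f) (V i (f + g)) ∨ lexLe (t i) (V i g) (V i (f + g)))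
    (Q3 : ∀ (i : Fin (M + 1)) (f g : W), f ≠ 0 → g ≠ 0 → V i f = V i g →
      ∃ c : K, c ≠ 0 ∧ (f = c • g ∨
        (f - c • g ≠ 0 ∧ lexLt (t i) (V i f) (V i (f - c • g)))))
    (Q4 : ∀ (i j : Fin (M + 1)) (f : W), f ≠ 0 → lexLe (t i) (V i f) (V j f))
    (Q5fin : Γ.Finite) (Q5img : ∀ i, V i '' {f : W | f ≠ 0} = Γ)
    (a a' : A → ℚ) (haΓ : a ∈ Γ) (ha'Γ : a' ∈ Γ) (hne : a ≠ a')
    (f : W) (hf : f ≠ 0)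
    (hfj : ∀ j : Fin (M + 1), j ≠ Fin.last M → V j f = a)
    (hfM : V (Fin.last M) f = a')
    (g : W) (hg : g ≠ 0) (hgj : ∀ j : Fin (M + 1), V j g = a') :
    ∃ c : K, c ≠ 0 ∧ f - c • g ≠ 0 ∧
      (∀ j : Fin (M + 1), j ≠ Fin.last M → V j (f - c • g) = a) ∧
      lexLt (t (Fin.last M)) a' (V (Fin.last M) (f - c • g)) ∧
      lexLe (t (Fin.last M)) (V (Fin.last M) (f - c • g)) a := by
  have h0 : (0 : Fin (M + 1)) ≠ Fin.last M := by
    simp only [ne_eq, Fin.ext_iff, Fin.val_last, Fin.val_zero]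
    omega
  obtain ⟨c, hc, hcase⟩ := Q3 (Fin.last M) f g hf hg (hfM.trans (hgj _).symm)
  rcases hcase with hfg | ⟨hne0, hlt⟩
  · exfalso
    have h1 : V 0 f = V 0 g := by rw [hfg, Q1 0 c g hc hg]
    rw [hfj 0 h0, hgj 0] at h1
    exact hne h1
  have hcg : c • g ≠ 0 := smul_ne_zero hc hg
  have hmain : ∀ j : Fin (M + 1), j ≠ Fin.last M → V j (f - c • g) = a := by
    intro j hj
    have hVcg : V j (c • g) = a' := by rw [Q1 j c g hc hg, hgj]
    have hVncg : V j (-(c • g)) = a' := by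
      rw [← neg_smul, Q1 j (-c) g (neg_ne_zero.2 hc) hg, hgj]
    have hle : lexLe (t j) a a' := by
      have := Q4 j (Fin.last M) f hf
      rwa [hfj j hj, hfM] at this
    have hupper : lexLe (t j) (V j (f - c • g)) a := by
      have h2 := Q2 j (f - c • g) (c • g) hne0 hcg (by rwa [sub_add_cancel])
      rw [sub_add_cancel, hfj j hj, hVcg] at h2
      rcases h2 with h2 | h2
      · exact h2
      · exact absurd (lexLe_antisymm' (t j) hle h2) hne
    have h3 := Q2 j f (-(c • g)) hf (neg_ne_zero.2 hcg)
      (by rwa [← sub_eq_add_neg])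
    rw [← sub_eq_add_neg, hfj j hj, hVncg] at h3
    rcases h3 with h3 | h3
    · exact lexLe_antisymm' (t j) hupper h3
    · exact absurd (lexLe_antisymm' (t j) hle (lexLe_trans' (t j) h3 hupper)) hne
  refine ⟨c, hc, hne0, hmain, ?_, ?_⟩
  · rwa [hfM] at hlt
  · have h4 := Q4 (Fin.last M) 0 (f - c • g) hne0
    rwa [hmain 0 h0] at h4
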